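/- For integers i, k, ℓ with 0 ≤ i ≤ k ≤ n and 0 ≤ ℓ ≤ n, the matrix identity W_{i,k} W̄_{k,ℓ} = q^{ℓ(k−i)} [n−i−ℓ choose k−i]_q · W̄_{i,ℓ} holds. -/

import Mathlib

open Matrix

/-- The Gaussian binomial coefficient `[a choose b]_q`, as a real number:
`∏_{i=0}^{b-1} (q^(a-i)-1)/(q^(b-i)-1)` for `a, b ≥ 0`, and `0` if `a < 0` or `b < 0`. -/
noncomputable def gbinom (q : ℝ) (a b : ℤ) : ℝ :=
  if 0 ≤ a ∧ 0 ≤ b then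
    ∏ i ∈ Finset.range b.toNat, (q ^ (a - i) - 1) / (q ^ (b - i) - 1)
  else 0

/-- The matrix `W_{k,ℓ}` on `L(V) × L(V)`: `(W_{k,ℓ})_{x,y} = 1` if `dim x = k`, `dim y = ℓ`
and `dim (x ⊓ y) = min k ℓ`, and `0` otherwise.  (Indices in `ℤ`, so that `W_{-1,0} = 0`.) -/
noncomputable def Wmat (K V : Type*) [Field K] [AddCommGroup V] [Module K V] (k l : ℤ) :
    Matrix (Submodule K V) (Submodule K V) ℝ :=
  Matrix.of fun x y =>
    if (Module.finrank K x : ℤ) = k ∧ (Module.finrank K y : ℤ) = l ∧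
        (Module.finrank K ↥(x ⊓ y) : ℤ) = min k l then 1 else 0

open Classical in
/-- The matrix `W̄_{k,ℓ}`: `(W̄_{k,ℓ})_{x,y} = 1` if `dim x = k`, `dim y = ℓ` and `x ⊓ y = ⊥`,
and `0` otherwise. -/
noncomputable def Wbarmat (K V : Type*) [Field K] [AddCommGroup V] [Module K V] (k l : ℤ) :
    Matrix (Submodule K V) (Submodule K V) ℝ :=
  Matrix.of fun x y =>
    if (Module.finrank K x : ℤ) = k ∧ (Module.finrank K y : ℤ) = l ∧ x ⊓ y = ⊥ then 1 else 0

section Lemmas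

variable {K M N : Type*} [Field K] [Fintype K] [AddCommGroup M] [Module K M]
  [AddCommGroup N] [Module K N]

local notation "q" => Fintype.card K

lemma card_indep (m : ℕ) [Finite M] :
    Nat.card {t : Fin m → M // LinearIndependent K t} =
      ∏ j ∈ Finset.range m, (q ^ Module.finrank K M - q ^ j) := by
  have : FiniteDimensional K M := Module.Finite.of_finite
  rcases le_or_gt m (Module.finrank K M) with h | h
  · rw [card_linearIndependent h, ← Fin.prod_univ_eq_prod_range]
  · have he : IsEmpty {t : Fin m → M // LinearIndependent K t} := by
      constructor
      rintro ⟨t, ht⟩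
      have := ht.fintype_card_le_finrank
      simp only [Fintype.card_fin] at this
      omega
    rw [Nat.card_of_isEmpty]
    symm
    apply Finset.prod_eq_zero (Finset.mem_range.2 h)
    simp

lemma card_indep_comp_surj (m : ℕ) [Finite M] (f : M →ₗ[K] N) (hf : Function.Surjective f) :
    Nat.card {s : Fin m → M // LinearIndependent K (f ∘ s)} =
      Nat.card (LinearMap.ker f) ^ m * Nat.card {t : Fin m → N // LinearIndependent K t} := by
  obtain ⟨g, hg⟩ := f.exists_rightInverse_of_surjective (LinearMap.range_eq_top.2 hf)
  have hfg : ∀ x, f (g x) = x := fun x => congrArg (· x) (congrArg DFunLike.coe hg)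
  have e : {s : Fin m → M // LinearIndependent K (f ∘ s)} ≃
      {t : Fin m → N // LinearIndependent K t} × (Fin m → LinearMap.ker f) :=
    { toFun := fun s => ⟨⟨f ∘ s.1, s.2⟩, fun j => ⟨s.1 j - g (f (s.1 j)), by
        simp [LinearMap.mem_ker, hfg]⟩⟩
      invFun := fun p => ⟨fun j => g (p.1.1 j) + (p.2 j).1, by
        have : f ∘ (fun j => g (p.1.1 j) + (p.2 j).1) = p.1.1 := by
          funext j
          have h2 := (p.2 j).2
          rw [LinearMap.mem_ker] at h2
          simp [hfg, h2]
        rw [this]; exact p.1.2⟩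
      left_inv := fun s => by
        ext j
        simp
      right_inv := fun p => by
        refine Prod.ext (Subtype.ext ?_) ?_
        · funext j
          have h2 := (p.2 j).2
          rw [LinearMap.mem_ker] at h2
          simp [hfg, h2]
        · funext j
          apply Subtype.ext
          have h2 := (p.2 j).2
          rw [LinearMap.mem_ker] at h2
          simp [hfg, h2] }
  rw [Nat.card_congr e, Nat.card_prod, Nat.card_fun]
  simp only [Nat.card_eq_fintype_card, Fintype.card_fin]
  ring

end Lemmas

section Lemmas2

variable {K M N : Type*} [Field K] [Fintype K] [AddCommGroup M] [Module K M]
  [AddCommGroup N] [Module K N]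

local notation "q" => Fintype.card K

lemma card_indep_comp (m : ℕ) [Finite M] (f : M →ₗ[K] N) :
    Nat.card {s : Fin m → M // LinearIndependent K (⇑f ∘ s)} =
      q ^ (Module.finrank K (LinearMap.ker f) * m) *
        ∏ j ∈ Finset.range m, (q ^ Module.finrank K (LinearMap.range f) - q ^ j) := by
  have hfin : Finite (LinearMap.range f) := Finite.of_surjective _ f.surjective_rangeRestrict
  have h1 : ∀ s : Fin m → M,
      LinearIndependent K (⇑f ∘ s) ↔ LinearIndependent K (⇑f.rangeRestrict ∘ s) := by
    intro s
    have : ⇑f ∘ s = ⇑(LinearMap.range f).subtype ∘ (⇑f.rangeRestrict ∘ s) := by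
      funext j; rfl
    rw [this]
    exact (LinearMap.range f).subtype.linearIndependent_iff (Submodule.ker_subtype _)
  have e : {s : Fin m → M // LinearIndependent K (⇑f ∘ s)} ≃
      {s : Fin m → M // LinearIndependent K (⇑f.rangeRestrict ∘ s)} :=
    Equiv.subtypeEquivRight h1
  rw [Nat.card_congr e,
    card_indep_comp_surj m f.rangeRestrict f.surjective_rangeRestrict,
    card_indep m, LinearMap.ker_rangeRestrict]
  congr 1
  have : Fintype (LinearMap.ker f) := Fintype.ofFinite _
  rw [Nat.card_eq_fintype_card, Module.card_eq_pow_finrank (K := K), ← pow_mul]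

end Lemmas2

section Count

open Submodule Module

variable {K V : Type*} [Field K] [Fintype K] [AddCommGroup V] [Module K V]
  [FiniteDimensional K V] [Fintype (Submodule K V)]

local notation "q" => Fintype.card K

lemma disjoint_span_ker {M N : Type*} [AddCommGroup M] [Module K M] [AddCommGroup N]
    [Module K N] {m : ℕ} {f : M →ₗ[K] N} {s : Fin m → M}
    (h : LinearIndependent K (⇑f ∘ s)) :
    Disjoint (span K (Set.range s)) (LinearMap.ker f) := by
  rw [Submodule.disjoint_def]
  intro w hw hker
  obtain ⟨c, hc⟩ := (mem_span_range_iff_exists_fun K).1 hw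
  have h0 : ∑ j, c j • (⇑f ∘ s) j = 0 := by
    have h1 : ∑ j, c j • (⇑f ∘ s) j = f w := by
      rw [← hc, map_sum]
      simp
    rw [h1]
    exact (LinearMap.mem_ker).1 hker
  have hc0 := Fintype.linearIndependent_iff.1 h c h0
  rw [← hc]
  simp [hc0]

lemma count_key (n i k l : ℕ) (hV : finrank K V = n) (hik : i ≤ k)
    (x y : Submodule K V) (hx : finrank K x = i) (hy : finrank K y = l)
    (hxy : x ⊓ y = ⊥) :
    Nat.card {z : Submodule K V // x ≤ z ∧ finrank K z = k ∧ z ⊓ y = ⊥} *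
        (q ^ (i * (k - i)) * ∏ j ∈ Finset.range (k - i), (q ^ (k - i) - q ^ j)) =
      q ^ ((i + l) * (k - i)) *
        ∏ j ∈ Finset.range (k - i), (q ^ (n - i - l) - q ^ j) := by
  have hfinV : Finite V := Module.finite_of_finite K
  set m := k - i with hm
  set p := x ⊔ y with hp
  have hpr : finrank K p = i + l := by
    have h1 := Submodule.finrank_sup_add_finrank_inf_eq x y
    rw [hxy, finrank_bot] at h1
    rw [hp, hx, hy] at *
    omega
  have hpn : i + l ≤ n := by
    have h2 : finrank K ↥p ≤ finrank K V := Submodule.finrank_le p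
    rw [hV, hpr] at h2
    exact h2
  set π := p.mkQ with hπ
  -- facts about tuples with independent image
  have fact : ∀ s : Fin m → V, LinearIndependent K (⇑π ∘ s) →
      x ≤ x ⊔ span K (Set.range s) ∧ finrank K ↥(x ⊔ span K (Set.range s)) = k ∧
        (x ⊔ span K (Set.range s)) ⊓ y = ⊥ := by
    intro s hs
    have hdisj : Disjoint (span K (Set.range s)) p := by
      have := disjoint_span_ker (K := K) hs
      rwa [Submodule.ker_mkQ] at this
    have hsind : LinearIndependent K s := hs.of_comp π
    have hspan : finrank K ↥(span K (Set.range s)) = m := by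
      rw [finrank_span_eq_card hsind, Fintype.card_fin]
    have hxs : x ⊓ span K (Set.range s) = ⊥ := by
      rw [eq_bot_iff]
      intro v hv
      have hv1 : v ∈ span K (Set.range s) ⊓ p := ⟨hv.2, le_sup_left (a := x) hv.1⟩
      rw [hdisj.eq_bot] at hv1
      exact hv1
    refine ⟨le_sup_left, ?_, ?_⟩
    · have h1 := Submodule.finrank_sup_add_finrank_inf_eq x (span K (Set.range s))
      rw [hxs, finrank_bot, hx, hspan] at h1
      omega
    · rw [Submodule.eq_bot_iff]
      intro v hv
      rw [Submodule.mem_inf] at hv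
      obtain ⟨hv1, hv2⟩ := hv
      rw [Submodule.mem_sup] at hv1
      obtain ⟨u, hu, w, hw, rfl⟩ := hv1
      have hwp : w ∈ p := by
        have h1 : u + w ∈ p := le_sup_right (a := x) hv2
        have h2 : u ∈ p := le_sup_left (b := y) hu
        simpa using sub_mem h1 h2
      have hw0 : w = 0 := by
        have : w ∈ span K (Set.range s) ⊓ p := ⟨hw, hwp⟩
        rwa [hdisj.eq_bot, Submodule.mem_bot] at this
      subst hw0
      rw [add_zero] at hv2 ⊢
      have : u ∈ x ⊓ y := ⟨hu, hv2⟩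
      rwa [hxy, Submodule.mem_bot] at this
  classical
  set P : Submodule K V → Prop := fun z => x ≤ z ∧ finrank K ↥z = k ∧ z ⊓ y = ⊥ with hP
  set Φ : {s : Fin m → V // LinearIndependent K (⇑π ∘ s)} → {z : Submodule K V // P z} :=
    fun s => ⟨x ⊔ span K (Set.range s.1), fact s.1 s.2⟩ with hΦ
  have fibeq : ∀ z : {z : Submodule K V // P z},
      Nat.card {s : {s : Fin m → V // LinearIndependent K (⇑π ∘ s)} // Φ s = z} =
        q ^ (i * m) * ∏ j ∈ Finset.range m, (q ^ m - q ^ j) := by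
    rintro ⟨z, hxz, hzk, hzy⟩
    have e2 : {s : {s : Fin m → V // LinearIndependent K (⇑π ∘ s)} //
          Φ s = ⟨z, hxz, hzk, hzy⟩} ≃
        {t : Fin m → ↥z // LinearIndependent K (⇑(π ∘ₗ z.subtype) ∘ t)} :=
      { toFun := fun sp => ⟨fun j => ⟨sp.1.1 j, by
          have hsz : x ⊔ span K (Set.range sp.1.1) = z := congrArg Subtype.val sp.2
          have hm2 : sp.1.1 j ∈ x ⊔ span K (Set.range sp.1.1) :=
            Submodule.mem_sup_right (Submodule.subset_span (Set.mem_range_self j))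
          rwa [hsz] at hm2⟩, sp.1.2⟩
        invFun := fun t => ⟨⟨fun j => (t.1 j : V), t.2⟩, by
          apply Subtype.ext
          have hle : x ⊔ span K (Set.range fun j => ((t.1 j : V))) ≤ z := by
            refine sup_le hxz (Submodule.span_le.2 ?_)
            rintro _ ⟨j, rfl⟩
            exact (t.1 j).2
          exact Submodule.eq_of_le_of_finrank_eq hle
            (((fact _ t.2).2.1).trans hzk.symm)⟩
        left_inv := fun sp => by
          apply Subtype.ext; apply Subtype.ext; funext j; rfl
        right_inv := fun t => by
          apply Subtype.ext; funext j; apply Subtype.ext; rfl }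
    have hzp : z ⊓ p = x := by
      apply le_antisymm
      · intro v hv
        rw [Submodule.mem_inf] at hv
        obtain ⟨hv1, hv2⟩ := hv
        rw [hp, Submodule.mem_sup] at hv2
        obtain ⟨a, ha, b, hb, hab⟩ := hv2
        have hbz : b ∈ z := by
          have haz : a ∈ z := hxz ha
          have : v - a ∈ z := sub_mem hv1 haz
          rwa [← hab, add_sub_cancel_left] at this
        have hb0 : b = 0 := by
          have : b ∈ z ⊓ y := ⟨hbz, hb⟩
          rwa [hzy, Submodule.mem_bot] at this
        rw [← hab, hb0, add_zero]
        exact ha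
      · exact le_inf hxz le_sup_left
    have hker : LinearMap.ker (π ∘ₗ z.subtype) = Submodule.comap z.subtype x := by
      rw [LinearMap.ker_comp, Submodule.ker_mkQ]
      ext v
      simp only [Submodule.mem_comap]
      constructor
      · intro h
        have : (v : V) ∈ z ⊓ p := ⟨v.2, h⟩
        rwa [hzp] at this
      · intro h
        rw [hp]
        exact Submodule.mem_sup_left h
    have hkerrank : finrank K ↥(LinearMap.ker (π ∘ₗ z.subtype)) = i := by
      rw [hker, (Submodule.comapSubtypeEquivOfLe hxz).finrank_eq, hx]
    have hrangerank : finrank K ↥(LinearMap.range (π ∘ₗ z.subtype)) = m := by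
      have h1 := LinearMap.finrank_range_add_finrank_ker (π ∘ₗ z.subtype)
      rw [hkerrank, hzk] at h1
      omega
    rw [Nat.card_congr e2, card_indep_comp m (π ∘ₗ z.subtype), hkerrank, hrangerank]
  have tot : Nat.card {s : Fin m → V // LinearIndependent K (⇑π ∘ s)} =
      q ^ ((i + l) * m) * ∏ j ∈ Finset.range m, (q ^ (n - i - l) - q ^ j) := by
    rw [card_indep_comp m π]
    have hk1 : LinearMap.ker π = p := Submodule.ker_mkQ p
    have hr1 : LinearMap.range π = ⊤ := Submodule.range_mkQ p
    have h2 := Submodule.finrank_quotient_add_finrank p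
    rw [hpr, hV] at h2
    have h3 : finrank K ↥(LinearMap.range π) = n - i - l := by
      rw [hr1, finrank_top]
      omega
    rw [hk1, hpr, h3]
  have decomp : Nat.card {s : Fin m → V // LinearIndependent K (⇑π ∘ s)} =
      Nat.card {z : Submodule K V // P z} *
        (q ^ (i * m) * ∏ j ∈ Finset.range m, (q ^ m - q ^ j)) := by
    haveI : Fintype {z : Submodule K V // P z} := Fintype.ofFinite _
    haveI : Fintype {s : Fin m → V // LinearIndependent K (⇑π ∘ s)} := Fintype.ofFinite _
    haveI : ∀ zz : {z : Submodule K V // P z},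
        Fintype {s : {s : Fin m → V // LinearIndependent K (⇑π ∘ s)} // Φ s = zz} :=
      fun zz => Fintype.ofFinite _
    calc Nat.card {s : Fin m → V // LinearIndependent K (⇑π ∘ s)}
        = Nat.card (Σ zz : {z : Submodule K V // P z},
            {s : {s : Fin m → V // LinearIndependent K (⇑π ∘ s)} // Φ s = zz}) :=
          (Nat.card_congr (Equiv.sigmaFiberEquiv Φ)).symm
      _ = ∑ zz : {z : Submodule K V // P z},
            Nat.card {s : {s : Fin m → V // LinearIndependent K (⇑π ∘ s)} // Φ s = zz} := by
          rw [Nat.card_eq_fintype_card, Fintype.card_sigma]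
          exact Finset.sum_congr rfl fun zz _ => (Nat.card_eq_fintype_card).symm
      _ = ∑ _zz : {z : Submodule K V // P z},
            (q ^ (i * m) * ∏ j ∈ Finset.range m, (q ^ m - q ^ j)) :=
          Finset.sum_congr rfl fun zz _ => fibeq zz
      _ = Nat.card {z : Submodule K V // P z} *
            (q ^ (i * m) * ∏ j ∈ Finset.range m, (q ^ m - q ^ j)) := by
          rw [Finset.sum_const, Nat.card_eq_fintype_card, Finset.card_univ, smul_eq_mul]
  rw [← decomp, tot]

end Count


open Submodule Module in
/-- For `0 ≤ i ≤ k ≤ n` and `0 ≤ ℓ ≤ n`: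
`W_{i,k} W̄_{k,ℓ} = q^{ℓ(k-i)} [n-i-ℓ choose k-i]_q • W̄_{i,ℓ}`. -/
theorem Wmat_mul_Wbarmat
    {K V : Type*} [Field K] [Fintype K] [AddCommGroup V] [Module K V] [FiniteDimensional K V]
    [Fintype (Submodule K V)]
    (n i k l : ℕ) (hV : Module.finrank K V = n)
    (hik : i ≤ k) (hkn : k ≤ n) (hln : l ≤ n) :
    Wmat K V i k * Wbarmat K V k l =
      ((Fintype.card K : ℝ) ^ (l * (k - i)) *
        gbinom (Fintype.card K) ((n : ℤ) - i - l) ((k : ℤ) - i)) • Wbarmat K V i l := by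
  classical
  set q := Fintype.card K with hq
  have hq1 : 1 < q := Fintype.one_lt_card
  have hQ1 : (1 : ℝ) < (q : ℝ) := by exact_mod_cast hq1
  have hQ0 : (q : ℝ) ≠ 0 := by positivity
  set m := k - i with hm
  ext x y
  rw [Matrix.mul_apply, Matrix.smul_apply]
  by_cases h : (finrank K x : ℤ) = i ∧ (finrank K y : ℤ) = l ∧ x ⊓ y = ⊥
  · -- main case
    obtain ⟨hxi, hyl, hxy⟩ := h
    have hxi' : finrank K x = i := by exact_mod_cast hxi
    have hyl' : finrank K y = l := by exact_mod_cast hyl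
    -- LHS is the count
    have hmin : min (i : ℤ) (k : ℤ) = (i : ℤ) := by
      apply min_eq_left; exact_mod_cast hik
    have hcond : ∀ z : Submodule K V,
        (((finrank K x : ℤ) = i ∧ (finrank K z : ℤ) = k ∧
            (finrank K ↥(x ⊓ z) : ℤ) = min (i : ℤ) (k : ℤ)) ∧
          ((finrank K z : ℤ) = k ∧ (finrank K y : ℤ) = l ∧ z ⊓ y = ⊥)) ↔
        (x ≤ z ∧ finrank K z = k ∧ z ⊓ y = ⊥) := by
      intro z
      constructor
      · rintro ⟨⟨_, hzk, hxz⟩, _, _, hzy⟩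
        rw [hmin] at hxz
        have hxz' : finrank K ↥(x ⊓ z) = finrank K x := by
          rw [hxi']; exact_mod_cast hxz
        have : x ⊓ z = x := Submodule.eq_of_le_of_finrank_eq inf_le_left hxz'
        exact ⟨inf_eq_left.1 this, by exact_mod_cast hzk, hzy⟩
      · rintro ⟨hxz, hzk, hzy⟩
        have hinf : x ⊓ z = x := inf_eq_left.2 hxz
        refine ⟨⟨hxi, by exact_mod_cast hzk, ?_⟩, by exact_mod_cast hzk, hyl, hzy⟩
        rw [hmin, hinf]; exact hxi
    have hLHS : ∑ z : Submodule K V, Wmat K V i k x z * Wbarmat K V k l z y =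
        (Nat.card {z : Submodule K V // x ≤ z ∧ finrank K ↥z = k ∧ z ⊓ y = ⊥} : ℝ) := by
      rw [Nat.card_eq_fintype_card, Fintype.card_subtype]
      push_cast
      rw [Finset.card_filter]
      push_cast
      apply Finset.sum_congr rfl
      intro z _
      have hc := hcond z
      rw [Wmat, Wbarmat]
      simp only [Matrix.of_apply, ite_mul, one_mul, zero_mul]
      split_ifs <;> first | rfl | tauto
    rw [hLHS]
    have hone : Wbarmat K V i l x y = 1 := by
      rw [Wbarmat]; simp only [Matrix.of_apply]; rw [if_pos ⟨hxi, hyl, hxy⟩]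
    rw [hone, smul_eq_mul, mul_one]
    have hck := count_key n i k l hV hik x y hxi' hyl' hxy
    have hpn : i + l ≤ n := by
      have h1 := Submodule.finrank_sup_add_finrank_inf_eq x y
      rw [hxy, finrank_bot] at h1
      have h2 : finrank K ↥(x ⊔ y) ≤ finrank K V := Submodule.finrank_le _
      rw [hV, hxi', hyl'] at *
      omega
    -- cast the counting identity to ℝ
    have hQpow : ∀ (a j : ℕ), (q : ℝ) ^ a - (q : ℝ) ^ j =
        (q : ℝ) ^ j * ((q : ℝ) ^ ((a : ℤ) - j) - 1) := by
      intro a j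
      rw [mul_sub, mul_one, ← zpow_natCast (q : ℝ) j, ← zpow_add₀ hQ0]
      have hj : (j : ℤ) + ((a : ℤ) - j) = (a : ℤ) := by ring
      rw [hj]
      norm_cast
    have hprodcast : ∀ a : ℕ, ((∏ j ∈ Finset.range m, (q ^ a - q ^ j) : ℕ) : ℝ) =
        ∏ j ∈ Finset.range m, ((q : ℝ) ^ a - (q : ℝ) ^ j) := by
      intro a
      by_cases ham : m ≤ a
      · rw [Nat.cast_prod]
        apply Finset.prod_congr rfl
        intro j hj
        have hjm := Finset.mem_range.1 hj
        have hle : q ^ j ≤ q ^ a := Nat.pow_le_pow_right (by omega) (by omega)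
        push_cast [hle]
        ring
      · have haR : a ∈ Finset.range m := Finset.mem_range.2 (by omega)
        have h1 : (∏ j ∈ Finset.range m, (q ^ a - q ^ j) : ℕ) = 0 :=
          Finset.prod_eq_zero haR (Nat.sub_self _)
        have h2 : (∏ j ∈ Finset.range m, ((q : ℝ) ^ a - (q : ℝ) ^ j)) = 0 :=
          Finset.prod_eq_zero haR (sub_self _)
        rw [h1, h2, Nat.cast_zero]
    set C : ℝ := (Nat.card {z : Submodule K V // x ≤ z ∧ finrank K ↥z = k ∧ z ⊓ y = ⊥} : ℝ)
      with hC
    have hcast : C * ((q : ℝ) ^ (i * m) * ∏ j ∈ Finset.range m,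
          ((q : ℝ) ^ m - (q : ℝ) ^ j)) =
        (q : ℝ) ^ ((i + l) * m) * ∏ j ∈ Finset.range m,
          ((q : ℝ) ^ (n - i - l) - (q : ℝ) ^ j) := by
      have h1 := congrArg (fun t : ℕ => (t : ℝ)) hck
      simp only [Nat.cast_mul, Nat.cast_pow] at h1
      rw [hprodcast m, hprodcast (n - i - l)] at h1
      exact h1
    -- decompose the products
    set E : ℝ := ∏ j ∈ Finset.range m, (q : ℝ) ^ j with hE
    set D : ℝ := ∏ j ∈ Finset.range m, ((q : ℝ) ^ ((m : ℤ) - j) - 1) with hD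
    set N : ℝ := ∏ j ∈ Finset.range m, ((q : ℝ) ^ ((n : ℤ) - i - l - j) - 1) with hN
    have hsplit1 : ∏ j ∈ Finset.range m, ((q : ℝ) ^ m - (q : ℝ) ^ j) = E * D := by
      rw [hE, hD, ← Finset.prod_mul_distrib]
      exact Finset.prod_congr rfl fun j _ => hQpow m j
    have hsplit2 : ∏ j ∈ Finset.range m, ((q : ℝ) ^ (n - i - l) - (q : ℝ) ^ j) = E * N := by
      rw [hE, hN, ← Finset.prod_mul_distrib]
      apply Finset.prod_congr rfl
      intro j _
      rw [hQpow (n - i - l) j]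
      have hnn : ((n - i - l : ℕ) : ℤ) - (j : ℤ) = (n : ℤ) - i - l - j := by
        omega
      rw [hnn]
    rw [hsplit1, hsplit2] at hcast
    -- nonvanishing
    have hDpos : ∀ j ∈ Finset.range m, (0 : ℝ) < (q : ℝ) ^ ((m : ℤ) - j) - 1 := by
      intro j hj
      have hjm := Finset.mem_range.1 hj
      have : (1 : ℝ) < (q : ℝ) ^ ((m : ℤ) - j) := by
        apply one_lt_zpow₀ hQ1
        omega
      linarith
    have hD0 : D ≠ 0 := by
      rw [hD]
      exact ne_of_gt (Finset.prod_pos hDpos)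
    have hE0 : E ≠ 0 := by
      rw [hE]
      exact ne_of_gt (Finset.prod_pos fun j _ => by positivity)
    have hne : (q : ℝ) ^ (i * m) * (E * D) ≠ 0 :=
      mul_ne_zero (pow_ne_zero _ hQ0) (mul_ne_zero hE0 hD0)
    -- unfold gbinom
    rw [gbinom, if_pos ⟨by omega, by omega⟩]
    have htn : ((k : ℤ) - i).toNat = m := by omega
    rw [htn, Finset.prod_div_distrib]
    have hDmatch : ∏ j ∈ Finset.range m, ((q : ℝ) ^ ((k : ℤ) - i - j) - 1) = D := by
      rw [hD]
      apply Finset.prod_congr rfl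
      intro j _
      congr 2
      omega
    rw [hDmatch]
    have hNmatch : ∏ j ∈ Finset.range m, ((q : ℝ) ^ ((n : ℤ) - i - l - j) - 1) = N := hN.symm
    rw [hNmatch]
    have hCval : C = (q : ℝ) ^ ((i + l) * m) * (E * N) / ((q : ℝ) ^ (i * m) * (E * D)) := by
      rw [eq_div_iff hne]
      exact hcast
    rw [hCval]
    have hpow : (q : ℝ) ^ ((i + l) * m) = (q : ℝ) ^ (i * m) * (q : ℝ) ^ (l * m) := by
      rw [← pow_add]
      congr 1
      ring
    rw [hpow]
    field_simp
  · -- degenerate case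
    have hzero : Wbarmat K V i l x y = 0 := by
      rw [Wbarmat]; simp only [Matrix.of_apply]; rw [if_neg h]
    rw [hzero, smul_zero]
    apply Finset.sum_eq_zero
    intro z _
    rw [Wmat, Wbarmat]
    simp only [Matrix.of_apply, ite_mul, one_mul, zero_mul]
    by_cases h1 : (finrank K x : ℤ) = i ∧ (finrank K z : ℤ) = k ∧
        (finrank K ↥(x ⊓ z) : ℤ) = min (i : ℤ) (k : ℤ)
    · rw [if_pos h1, if_neg]
      rintro ⟨hzk, hyl, hzy⟩
      apply h
      refine ⟨h1.1, hyl, ?_⟩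
      have hmin : min (i : ℤ) (k : ℤ) = (i : ℤ) := by
        apply min_eq_left; exact_mod_cast hik
      rw [hmin] at h1
      have hxz' : finrank K ↥(x ⊓ z) = finrank K x := by omega
      have hinf : x ⊓ z = x := Submodule.eq_of_le_of_finrank_eq inf_le_left hxz'
      have hxz : x ≤ z := inf_eq_left.1 hinf
      rw [eq_bot_iff]
      calc x ⊓ y ≤ z ⊓ y := inf_le_inf_right y hxz
        _ = ⊥ := hzy
    · rw [if_neg h1]
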